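/- Let p > 1 be an integer and n ≥ 7 an odd integer. Then 3·((n+1)/2)^p + ((n-1)/2)^p + (n-4) ≤ (n-1)^p + (n-1)·2^p. (Equivalently, the p-th power sum of the n-tuple ((n+1)/2, (n+1)/2, (n+1)/2, (n-1)/2, 1, …, 1) is at most that of (n-1, 2, …, 2, 2).) -/
import Mathlib


theorem lambda2_le_lambda1 (p n : ℕ) (hp : 1 < p) (hn : 7 ≤ n) (hodd : Odd n) :
    3 * (((n : ℝ) + 1) / 2) ^ p + (((n : ℝ) - 1) / 2) ^ p + ((n : ℝ) - 4) ≤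
      ((n : ℝ) - 1) ^ p + ((n : ℝ) - 1) * 2 ^ p := by
  have hx : (7:ℝ) ≤ (n:ℝ) := by exact_mod_cast hn
  set x := (n:ℝ) with hxdef
  clear_value x
  clear hn hodd hxdef
  have hp2 : 2 ≤ p := hp
  clear hp
  induction p, hp2 using Nat.le_induction with
  | base => nlinarith [sq_nonneg (x-1)]
  | succ p hp ih =>
    have ha : (1:ℝ) ≤ (x+1)/2 := by linarith
    have hb : (1:ℝ) ≤ (x-1)/2 := by linarith
    have h2p : (0:ℝ) < 2^p := by positivity
    have hbp : (0:ℝ) < ((x-1)/2)^p := by positivity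
    have hkey : (x-1)*2^p ≤ (x-1)^p := by
      have h1 : ((x-1)/2)^2 ≤ ((x-1)/2)^p := pow_le_pow_right₀ hb hp
      have h2 : (x-1)^p = ((x-1)/2)^p * 2^p := by
        rw [← mul_pow]; ring_nf
      nlinarith [sq_nonneg (x-5), h2p]
    have ihm := mul_le_mul_of_nonneg_left ih (by linarith : (0:ℝ) ≤ (x+1)/2)
    rw [pow_succ, pow_succ, pow_succ, pow_succ]
    nlinarith [ihm, hbp, h2p, mul_le_mul_of_nonneg_left hkey (by linarith : (0:ℝ) ≤ (x-3)/2), pow_nonneg (by linarith : (0:ℝ) ≤ (x+1)/2) p]
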